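/- Let r ∈ ℚ ∩ [0,1], A a complete local noetherian ℤ_p[p^r]-algebra with residue field of characteristic p, and W(A) a complete local noetherian ℤ_p[p^r]-algebra with a surjection W(A) → A in which p^r is a regular element. Let f : A[[x]] → A[[u]] be an A-algebra map with f(x) = Σ a_i u^i, and δ a B-module homomorphism Ω̂_{A[[x]]/A} → Ω̂_{A[[u]]/A} with δ(dx) = (Σ b_{j+1} u^j) du. Then δ is p^r-earnest (i.e. a_i = p^r·b_i/i for i ≢ 0 mod p and b_i = (i/p^r)·a_i for i ≡ 0 mod p) if and only if there exists a lifting f̃ : W(A)[[x]] → W(A)[[u]] of f with p^r | df̃ and δ equal to the reduction of df̃/p^r. -/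
import Mathlib


noncomputable section

/-- In a local ring where `p` is in the maximal ideal, any natural number not divisible
by the prime `p` is a unit. -/
lemma aux_isUnit_natCast (p : ℕ) (hp : Nat.Prime p) (R : Type*) [CommRing R] [IsLocalRing R]
    (hpR : (p : R) ∈ IsLocalRing.maximalIdeal R) (i : ℕ) (hi : ¬ p ∣ i) :
    IsUnit (i : R) := by
  have hcop : Nat.Coprime p i := (Nat.Prime.coprime_iff_not_dvd hp).mpr hi
  have : IsCoprime (p : ℤ) (i : ℤ) := Int.isCoprime_iff_gcd_eq_one.mpr hcop
  obtain ⟨u, v, huv⟩ := this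
  have h1 : (v : ℤ) * i = 1 - u * p := by linarith
  have h1R : ((v : ℤ) : R) * (i : R) = 1 - ((u : ℤ) : R) * (p : R) := by
    have := congrArg (fun z : ℤ => (z : R)) h1
    push_cast at this ⊢
    exact this
  have hunit : IsUnit (1 - ((u : ℤ) : R) * (p : R)) := by
    apply IsLocalRing.isUnit_one_sub_self_of_mem_nonunits
    exact (IsLocalRing.maximalIdeal R).mul_mem_left _ hpR
  exact isUnit_of_mul_isUnit_right (h1R ▸ hunit)

theorem stmt10 (p : ℕ) [Fact (Nat.Prime p)]
    (O : Type*) [CommRing O] (π : O)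
    (e : ℕ → O) (he : ∀ i : ℕ, p ∣ i → π * e i = (i : O))
    (A W : Type*) [CommRing A] [CommRing W]
    [IsLocalRing A] [IsNoetherianRing A] [IsAdicComplete (IsLocalRing.maximalIdeal A) A]
    [IsLocalRing W] [IsNoetherianRing W] [IsAdicComplete (IsLocalRing.maximalIdeal W) W]
    (hres : CharP (IsLocalRing.ResidueField A) p)
    [Algebra O A] [Algebra O W]
    (φ : W →+* A) (hφ : Function.Surjective φ)
    (hcomp : φ.comp (algebraMap O W) = algebraMap O A)
    (hreg : algebraMap O W π ∈ nonZeroDivisors W)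
    (a b : ℕ → A) :
    ((∀ i : ℕ, ¬ p ∣ i → (i : A) * a i = algebraMap O A π * b i) ∧
     (∀ i : ℕ, p ∣ i → b i = algebraMap O A (e i) * a i)) ↔
    (∃ aw bw : ℕ → W,
      (∀ i, φ (aw i) = a i) ∧ (∀ i, φ (bw i) = b i) ∧
      (∀ i : ℕ, algebraMap O W π * bw i = (i : W) * aw i)) := by
  have hp : Nat.Prime p := Fact.out
  -- `p` lies in the maximal ideal of `A`
  have hpA : (p : A) ∈ IsLocalRing.maximalIdeal A := by
    rw [← IsLocalRing.residue_eq_zero_iff]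
    have : ((p : ℕ) : IsLocalRing.ResidueField A) = 0 := CharP.cast_eq_zero _ p
    rwa [show ((p : ℕ) : IsLocalRing.ResidueField A)
        = IsLocalRing.residue A ((p : ℕ) : A) by rfl] at this
  -- `p` lies in the maximal ideal of `W`
  have hpW : (p : W) ∈ IsLocalRing.maximalIdeal W := by
    rw [IsLocalRing.mem_maximalIdeal]
    intro hu
    have : IsUnit ((p : ℕ) : A) := by
      have := hu.map φ
      rwa [map_natCast] at this
    exact (IsLocalRing.mem_maximalIdeal _).mp hpA this
  have hπ : φ (algebraMap O W π) = algebraMap O A π := by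
    rw [← hcomp]; rfl
  have hπe : ∀ i, φ (algebraMap O W (e i)) = algebraMap O A (e i) := by
    intro i; rw [← hcomp]; rfl
  constructor
  · rintro ⟨h1, h2⟩
    set aw0 : ℕ → W := fun i => (hφ (a i)).choose with haw0def
    set bw0 : ℕ → W := fun i => (hφ (b i)).choose with hbw0def
    have haw0' : ∀ i, φ (aw0 i) = a i := fun i => (hφ (a i)).choose_spec
    have hbw0' : ∀ i, φ (bw0 i) = b i := fun i => (hφ (b i)).choose_spec
    classical
    refine ⟨fun i => if h : p ∣ i then aw0 i else
        (((aux_isUnit_natCast p hp W hpW i h).unit⁻¹ : Wˣ) : W) * (algebraMap O W π * bw0 i),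
      fun i => if p ∣ i then algebraMap O W (e i) * aw0 i else bw0 i, ?_, ?_, ?_⟩
    · intro i
      by_cases h : p ∣ i
      · simp [h, haw0']
      · simp only [h, dif_neg, not_false_iff]
        have hiA : IsUnit ((i : ℕ) : A) := aux_isUnit_natCast p hp A hpA i h
        apply hiA.mul_left_cancel
        have hinv : (i : A) * φ (((aux_isUnit_natCast p hp W hpW i h).unit⁻¹ : Wˣ) : W) = 1 := by
          rw [← map_natCast φ, ← map_mul, ← map_one φ]
          congr 1
          exact (aux_isUnit_natCast p hp W hpW i h).mul_val_inv
        rw [map_mul, ← mul_assoc, hinv, one_mul, map_mul, hπ, hbw0']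
        exact (h1 i h).symm
    · intro i
      by_cases h : p ∣ i
      · simp only [h, if_pos, map_mul, hπe, haw0']
        exact (h2 i h).symm
      · simp [h, hbw0']
    · intro i
      by_cases h : p ∣ i
      · simp only [h, if_pos, dif_pos]
        rw [← mul_assoc, ← map_mul, he i h, map_natCast]
      · simp only [h, if_neg, dif_neg, not_false_iff]
        have hinv : (i : W) * (((aux_isUnit_natCast p hp W hpW i h).unit⁻¹ : Wˣ) : W) = 1 :=
          (aux_isUnit_natCast p hp W hpW i h).mul_val_inv
        rw [← mul_assoc, hinv, one_mul]
  · rintro ⟨aw, bw, haw, hbw, hkey⟩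
    constructor
    · intro i hi
      have := congrArg φ (hkey i)
      rw [map_mul, map_mul, hπ, map_natCast, haw, hbw] at this
      exact this.symm
    · intro i hi
      have hW : bw i = algebraMap O W (e i) * aw i := by
        have : algebraMap O W π * bw i = algebraMap O W π * (algebraMap O W (e i) * aw i) := by
          rw [hkey i, ← mul_assoc, ← map_mul, he i hi, map_natCast]
        exact (mul_cancel_left_mem_nonZeroDivisors hreg).mp this
      have := congrArg φ hW
      rwa [map_mul, hπe, haw, hbw] at this
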